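/- For every integer n ≥ 3, the cycle C_n on n vertices is a (2,2)-dominated graph if and only if n is even. -/

import Mathlib

/-- The degree of a vertex, as the cardinality of its neighbor set. -/
noncomputable def deg {V : Type*} [Fintype V] (G : SimpleGraph V) (v : V) : ℕ :=
  (G.neighborSet v).ncard

/-- `D` is a `k`-dominating set of `G`: every vertex outside `D`
has at least `k` neighbors in `D`. -/
def KDomSet {V : Type*} [Fintype V] (G : SimpleGraph V) (k : ℕ) (D : Set V) : Prop :=
  ∀ v ∉ D, k ≤ (G.neighborSet v ∩ D).ncard

/-- `(D₁, D₂)` is a `(k,ℓ)`-pair in `G`: `D₁` and `D₂` are disjoint proper subsets of the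
vertex set, `D₁` is `k`-dominating and `D₂` is `ℓ`-dominating. -/
def KLPair {V : Type*} [Fintype V] (G : SimpleGraph V) (k ℓ : ℕ) (D₁ D₂ : Set V) : Prop :=
  Disjoint D₁ D₂ ∧ D₁ ≠ Set.univ ∧ D₂ ≠ Set.univ ∧ KDomSet G k D₁ ∧ KDomSet G ℓ D₂

/-- `G` is a `(k,ℓ)`-dominated graph: it contains a `(k,ℓ)`-pair. -/
def KLDominated {V : Type*} [Fintype V] (G : SimpleGraph V) (k ℓ : ℕ) : Prop :=
  ∃ D₁ D₂ : Set V, KLPair G k ℓ D₁ D₂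

/-- `G` is bipartite with partite sets `A` and `B`. -/
def BipartiteWith {V : Type*} (G : SimpleGraph V) (A B : Set V) : Prop :=
  A ∪ B = Set.univ ∧ A ∩ B = ∅ ∧
    ∀ ⦃u v⦄, G.Adj u v → (u ∈ A ∧ v ∈ B) ∨ (u ∈ B ∧ v ∈ A)

/-- `G` is bipartite. -/
def IsBipartite {V : Type*} (G : SimpleGraph V) : Prop :=
  ∃ A B : Set V, BipartiteWith G A B

/-- A connected graph `G` is a minimal `(2,2)`-dominated graph if `G` is `(2,2)`-dominated and
no proper spanning subgraph of `G` is `(2,2)`-dominated. -/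
def Minimal22 {V : Type*} [Fintype V] (G : SimpleGraph V) : Prop :=
  G.Connected ∧ KLDominated G 2 2 ∧ ∀ H : SimpleGraph V, H < G → ¬ KLDominated H 2 2


open SimpleGraph
open scoped Fin.CommRing

section Aux

lemma sub_ne_add (m : ℕ) (v : Fin (m + 3)) : v - 1 ≠ v + 1 := by
  intro h
  have h2 : (v + 1) - (v - 1) = 2 := by ring
  rw [← h, sub_self] at h2
  have := congrArg Fin.val h2
  simp [Fin.ext_iff] at this
  rw [Nat.mod_eq_of_lt (by omega)] at this
  omega

lemma nbr_set (m : ℕ) (v : Fin (m + 3)) :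
    (cycleGraph (m + 3)).neighborSet v = {v - 1, v + 1} :=
  cycleGraph_neighborSet (n := m + 1)

lemma nbr_ncard (m : ℕ) (v : Fin (m + 3)) :
    ((cycleGraph (m + 3)).neighborSet v).ncard = 2 := by
  rw [nbr_set]
  exact Set.ncard_pair (sub_ne_add m v)

lemma sub_val (m : ℕ) (v : Fin (m + 3)) : (v - 1).val = (v.val + (m + 2)) % (m + 3) := by
  rw [Fin.sub_def]
  simp [Fin.val_one]
  ring_nf

lemma add_val (m : ℕ) (v : Fin (m + 3)) : (v + 1).val = (v.val + 1) % (m + 3) := by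
  rw [Fin.add_def]
  simp [Fin.val_one]

lemma parity_add (m : ℕ) (hm : Even (m + 3)) (v : Fin (m + 3)) :
    Even ((v + 1).val) ↔ ¬ Even v.val := by
  have h2 : (2 : ℕ) ∣ (m + 3) := hm.two_dvd
  have := Nat.mod_mod_of_dvd (v.val + 1) h2
  rw [add_val, Nat.even_iff, Nat.even_iff]
  omega

lemma parity_sub (m : ℕ) (hm : Even (m + 3)) (v : Fin (m + 3)) :
    Even ((v - 1).val) ↔ ¬ Even v.val := by
  have h2 : (2 : ℕ) ∣ (m + 3) := hm.two_dvd
  have := Nat.mod_mod_of_dvd (v.val + (m + 2)) h2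
  obtain ⟨k, hk⟩ := hm
  rw [sub_val, Nat.even_iff, Nat.even_iff]
  omega

/-- From a 2-dominating set: a vertex outside has both neighbors inside. -/
lemma dom_step (m : ℕ) {D : Set (Fin (m + 3))}
    (hD : KDomSet (cycleGraph (m + 3)) 2 D) {v : Fin (m + 3)} (hv : v ∉ D) :
    v - 1 ∈ D ∧ v + 1 ∈ D := by
  have h := hD v hv
  have hsub : (cycleGraph (m + 3)).neighborSet v ∩ D ⊆ (cycleGraph (m + 3)).neighborSet v :=
    Set.inter_subset_left
  have heq := Set.eq_of_subset_of_ncard_le hsub (by rw [nbr_ncard]; exact h)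
  have hsubD : (cycleGraph (m + 3)).neighborSet v ⊆ D := by
    rw [← heq]; exact Set.inter_subset_right
  constructor
  · exact hsubD (by rw [nbr_set]; left; rfl)
  · exact hsubD (by rw [nbr_set]; right; rfl)

end Aux

theorem stmt_17 (n : ℕ) (hn : 3 ≤ n) :
    KLDominated (SimpleGraph.cycleGraph n) 2 2 ↔ Even n := by
  obtain ⟨m, rfl⟩ : ∃ m, n = m + 3 := ⟨n - 3, by omega⟩
  constructor
  · rintro ⟨D₁, D₂, hdisj, h1u, h2u, hd1, hd2⟩
    -- step: v + 1 ∈ D₁ ↔ v ∉ D₁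
    have step : ∀ v : Fin (m + 3), v + 1 ∈ D₁ ↔ v ∉ D₁ := by
      intro v
      constructor
      · intro h1 hv
        have hv2 : v ∉ D₂ := fun h => hdisj.ne_of_mem hv h rfl
        have := (dom_step m hd2 hv2).2
        exact hdisj.ne_of_mem h1 this rfl
      · intro hv
        exact (dom_step m hd1 hv).2
    have key : ∀ k : ℕ, ((k : Fin (m + 3)) ∈ D₁ ↔ (Even k ↔ (0 : Fin (m + 3)) ∈ D₁)) := by
      intro k
      induction k with
      | zero => simp
      | succ k ih =>
        have hc : ((k + 1 : ℕ) : Fin (m + 3)) = (k : Fin (m + 3)) + 1 := by push_cast; ring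
        rw [hc, step, Nat.even_add_one]
        tauto
    have h0 := key (m + 3)
    rw [Fin.natCast_self] at h0
    tauto
  · intro hm
    refine ⟨{v | Even v.val}, {v | ¬ Even v.val}, ?_, ?_, ?_, ?_, ?_⟩
    · rw [Set.disjoint_iff_inter_eq_empty]
      ext v; simp
    · intro h
      have : (1 : Fin (m + 3)) ∈ {v : Fin (m + 3) | Even v.val} := h ▸ Set.mem_univ _
      simp [Fin.val_one] at this
    · intro h
      have : (0 : Fin (m + 3)) ∈ {v : Fin (m + 3) | ¬ Even v.val} := h ▸ Set.mem_univ _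
      simp at this
    · intro v hv
      simp only [Set.mem_setOf_eq, not_not] at hv
      have hsub : (cycleGraph (m + 3)).neighborSet v ∩ {v | Even v.val} =
          (cycleGraph (m + 3)).neighborSet v := by
        rw [Set.inter_eq_left]
        intro w hw
        rw [nbr_set] at hw
        rcases hw with rfl | rfl
        · exact (parity_sub m hm v).mpr hv
        · exact (parity_add m hm v).mpr hv
      rw [hsub, nbr_ncard]
    · intro v hv
      simp only [Set.mem_setOf_eq, not_not] at hv
      have hsub : (cycleGraph (m + 3)).neighborSet v ∩ {v | ¬ Even v.val} =
          (cycleGraph (m + 3)).neighborSet v := by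
        rw [Set.inter_eq_left]
        intro w hw
        rw [nbr_set] at hw
        rcases hw with rfl | rfl
        · simp only [Set.mem_setOf_eq, (parity_sub m hm v)]; tauto
        · simp only [Set.mem_setOf_eq, (parity_add m hm v)]; tauto
      rw [hsub, nbr_ncard]
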